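/- Lower bound on excess prediction risk in statistical learning: Fix η > 0 and an integer 1 ≤ r ≤ min(m1, m2) with max(m1,m2)·r ≤ n. Let (X_i, Y_i) be i.i.d. realizations of (X, Y) with distribution P_{XY}, and R(A) = E[(Y − ⟨A, X⟩)²]. Then inf over all estimators Â of sup over matrices A with rank(A) ≤ r of sup over P_{XY} ∈ 𝒫_η of P( R(Â) ≥ R(A) + c η² max(m1,m2) r / n ) ≥ β, where β ∈ (0,1) and c > 0 are absolute constants. -/

import Mathlib

open MeasureTheory ProbabilityTheory Matrix Real
open scoped ENNReal NNReal BigOperators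

noncomputable section

instance {m1 m2 : ℕ} : MeasurableSpace (Matrix (Fin m1) (Fin m2) ℝ) :=
  (inferInstance : MeasurableSpace (Fin m1 → Fin m2 → ℝ))

/-- Trace inner product `⟨A,B⟩ = tr(AᵀB)`. -/
def tip {m1 m2 : ℕ} (A B : Matrix (Fin m1) (Fin m2) ℝ) : ℝ := (Aᵀ * B).trace

/-- Frobenius norm `‖A‖₂`. -/
def frob {m1 m2 : ℕ} (A : Matrix (Fin m1) (Fin m2) ℝ) : ℝ :=
  Real.sqrt (∑ i, ∑ j, (A i j) ^ 2)

/-- Singular values (unordered): square roots of the eigenvalues of `AᴴA`. -/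
def sval {m1 m2 : ℕ} (A : Matrix (Fin m1) (Fin m2) ℝ) (j : Fin m2) : ℝ :=
  Real.sqrt (((by simpa [Matrix.conjTranspose_eq_transpose_of_trivial] using Matrix.isHermitian_conjTranspose_mul_self A : (Aᵀ * A).IsHermitian)).eigenvalues j)

/-- Nuclear norm `‖A‖₁`: sum of singular values. -/
def nuc {m1 m2 : ℕ} (A : Matrix (Fin m1) (Fin m2) ℝ) : ℝ := ∑ j, sval A j

/-- Operator (spectral) norm `‖A‖_∞`. -/
def opnorm {m1 m2 : ℕ} (A : Matrix (Fin m1) (Fin m2) ℝ) : ℝ :=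
  ‖LinearMap.toContinuousLinearMap (Matrix.toEuclideanLin A)‖

/-- Squared `L₂(Π)`-norm: `‖A‖²_{L₂(Π)} = (1/n) ∑ᵢ E⟨A, Xᵢ⟩²`. -/
def l2sq {Ω : Type*} [MeasurableSpace Ω] (μ : Measure Ω) {n m1 m2 : ℕ}
    (X : Fin n → Ω → Matrix (Fin m1) (Fin m2) ℝ) (A : Matrix (Fin m1) (Fin m2) ℝ) : ℝ :=
  (1 / (n : ℝ)) * ∑ i, ∫ ω, (tip A (X i ω)) ^ 2 ∂μ

/-- The matrix `E(Yᵢ Xᵢ)` (entrywise expectation). -/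
def meanYX {Ω : Type*} [MeasurableSpace Ω] (μ : Measure Ω) {n m1 m2 : ℕ}
    (X : Fin n → Ω → Matrix (Fin m1) (Fin m2) ℝ) (Y : Fin n → Ω → ℝ) (i : Fin n) :
    Matrix (Fin m1) (Fin m2) ℝ :=
  Matrix.of fun j k => ∫ ω, Y i ω * X i ω j k ∂μ

/-- The stochastic error matrix `M = (1/n) ∑ᵢ (Yᵢ Xᵢ − E(Yᵢ Xᵢ))`. -/
def errM {Ω : Type*} [MeasurableSpace Ω] (μ : Measure Ω) {n m1 m2 : ℕ}
    (X : Fin n → Ω → Matrix (Fin m1) (Fin m2) ℝ) (Y : Fin n → Ω → ℝ) (ω : Ω) :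
    Matrix (Fin m1) (Fin m2) ℝ :=
  (n : ℝ)⁻¹ • ∑ i, (Y i ω • X i ω - meanYX μ X Y i)

/-- The penalized objective `L_n(A) = ‖A‖²_{L₂(Π)} − ⟨(2/n)∑ᵢYᵢXᵢ, A⟩ + λ‖A‖₁`. -/
def Ln {Ω : Type*} [MeasurableSpace Ω] (μ : Measure Ω) {n m1 m2 : ℕ}
    (X : Fin n → Ω → Matrix (Fin m1) (Fin m2) ℝ) (Y : Fin n → Ω → ℝ) (lam : ℝ)
    (A : Matrix (Fin m1) (Fin m2) ℝ) (ω : Ω) : ℝ :=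
  l2sq μ X A - tip ((2 / (n : ℝ)) • ∑ i, Y i ω • X i ω) A + lam * nuc A

/-- Matrix of the orthogonal projection onto a subspace of `ℝ^d`. -/
def projMat {d : ℕ} (K : Submodule ℝ (EuclideanSpace ℝ (Fin d))) : Matrix (Fin d) (Fin d) ℝ :=
  Matrix.toEuclideanLin.symm (K.subtype ∘ₗ (K.orthogonalProjectionOnto).toLinearMap)

/-- Column space of `A` (the span of its left singular vectors `S₁`). -/
def colSpan {m1 m2 : ℕ} (A : Matrix (Fin m1) (Fin m2) ℝ) :
    Submodule ℝ (EuclideanSpace ℝ (Fin m1)) := LinearMap.range (Matrix.toEuclideanLin A)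

/-- Row space of `A` (the span of its right singular vectors `S₂`). -/
def rowSpan {m1 m2 : ℕ} (A : Matrix (Fin m1) (Fin m2) ℝ) :
    Submodule ℝ (EuclideanSpace ℝ (Fin m2)) := LinearMap.range (Matrix.toEuclideanLin Aᵀ)

/-- `𝒫_A^⊥(B) = P_{S₁ᗮ} B P_{S₂ᗮ}` where `(S₁, S₂)` is the support of `A`. -/
def Pperp {m1 m2 : ℕ} (A B : Matrix (Fin m1) (Fin m2) ℝ) : Matrix (Fin m1) (Fin m2) ℝ :=
  projMat (colSpan A)ᗮ * B * projMat (rowSpan A)ᗮ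

/-- `𝒫_A(B) = B - P_{S₁ᗮ} B P_{S₂ᗮ}`. -/
def calP {m1 m2 : ℕ} (A B : Matrix (Fin m1) (Fin m2) ℝ) : Matrix (Fin m1) (Fin m2) ℝ :=
  B - Pperp A B

/-- The uniform distribution on the matrix completion basis
`𝒳 = {eⱼ(m₁) eₖ(m₂)ᵀ}`. -/
def unifX (m1 m2 : ℕ) : Measure (Matrix (Fin m1) (Fin m2) ℝ) :=
  ((m1 * m2 : ℝ≥0∞))⁻¹ •
    ∑ j : Fin m1, ∑ k : Fin m2, Measure.dirac (Matrix.single j k (1 : ℝ))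

/-- The matrix `𝐗 = (m₁m₂/n) ∑ᵢ Yᵢ Xᵢ`. -/
def hatX {Ω : Type*} {n m1 m2 : ℕ} (X : Fin n → Ω → Matrix (Fin m1) (Fin m2) ℝ)
    (Y : Fin n → Ω → ℝ) (ω : Ω) : Matrix (Fin m1) (Fin m2) ℝ :=
  ((m1 * m2 : ℝ) / (n : ℝ)) • ∑ i, Y i ω • X i ω

/-- The matrix-completion objective `‖A − B‖₂² + λ m₁m₂ ‖A‖₁`. -/
def Fobj {m1 m2 : ℕ} (lam : ℝ) (B A : Matrix (Fin m1) (Fin m2) ℝ) : ℝ :=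
  frob (A - B) ^ 2 + lam * (m1 * m2 : ℝ) * nuc A

/-- The prediction risk `R(A) = E[(Y − ⟨A,X⟩)²]` under the distribution `P` of `(X,Y)`. -/
def risk {m1 m2 : ℕ} (P : Measure (Matrix (Fin m1) (Fin m2) ℝ × ℝ))
    (A : Matrix (Fin m1) (Fin m2) ℝ) : ℝ :=
  ∫ p, (p.2 - tip A p.1) ^ 2 ∂P

/-- Membership in the class `𝒫_η`: `X ~ Π₀` (uniform on the matrix completion basis) and
`|Y| ≤ η` almost surely. -/
def memPeta (m1 m2 : ℕ) (η : ℝ) (P : Measure (Matrix (Fin m1) (Fin m2) ℝ × ℝ)) : Prop :=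
  IsProbabilityMeasure P ∧ P.map Prod.fst = unifX m1 m2 ∧ (∀ᵐ p ∂P, |p.2| ≤ η)

/-- The law of an i.i.d. sample of size `n` from `P`. -/
def iidSample {α : Type*} [MeasurableSpace α] (n : ℕ) (P : Measure α)
    (hP : IsProbabilityMeasure P) : Measure (Fin n → α) :=
  haveI := hP
  Measure.pi fun _ => P


section LowerBoundProof
open Finset
set_option linter.unusedSectionVars false
set_option maxHeartbeats 1000000


instance {m1 m2 : ℕ} : MeasurableSingletonClass (Matrix (Fin m1) (Fin m2) ℝ) :=
  (inferInstance : MeasurableSingletonClass (Fin m1 → Fin m2 → ℝ))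

variable {α : Type*} [MeasurableSpace α] [MeasurableSingletonClass α]
variable {ι : Type*} [Fintype ι]

lemma sum_smul_dirac_apply (w : ι → ℝ≥0∞) (x : ι → α) (s : Set α) :
    (∑ q : ι, w q • Measure.dirac (x q)) s = ∑ q : ι, w q * s.indicator 1 (x q) := by
  have h := congrFun (Measure.coe_finset_sum (univ : Finset ι)
    (fun q => w q • Measure.dirac (x q))) s
  simp only [Finset.sum_apply] at h
  rw [h]
  refine Finset.sum_congr rfl fun q _ => ?_
  rw [Measure.smul_apply, Measure.dirac_apply, smul_eq_mul]

lemma isProb_sum_smul_dirac (w : ι → ℝ≥0∞) (x : ι → α) (hw : ∑ q : ι, w q = 1) :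
    IsProbabilityMeasure (∑ q : ι, w q • Measure.dirac (x q)) := by
  constructor
  rw [sum_smul_dirac_apply]
  simpa using hw

lemma pi_sum_dirac (w : ι → ℝ≥0∞) (x : ι → α) (hw : ∑ q : ι, w q = 1) (n : ℕ) :
    Measure.pi (fun _ : Fin n => ∑ q : ι, w q • Measure.dirac (x q)) =
      ∑ f : Fin n → ι, (∏ i, w (f i)) • Measure.dirac (fun i => x (f i)) := by
  haveI := isProb_sum_smul_dirac w x hw
  refine Measure.pi_eq fun s hs => ?_
  rw [sum_smul_dirac_apply]
  have key : ∀ f : Fin n → ι,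
      (Set.univ.pi s).indicator (1 : (Fin n → α) → ℝ≥0∞) (fun i => x (f i)) =
        ∏ i, (s i).indicator (1 : α → ℝ≥0∞) (x (f i)) := by
    intro f
    by_cases h : ∀ i, x (f i) ∈ s i
    · rw [Set.indicator_of_mem (by simpa [Set.mem_univ_pi] using h)]
      rw [Finset.prod_congr rfl fun i _ => Set.indicator_of_mem (h i) 1]
      simp
    · push_neg at h
      obtain ⟨i, hi⟩ := h
      rw [Set.indicator_of_notMem (by simp [Set.mem_univ_pi]; exact ⟨i, hi⟩)]
      exact (Finset.prod_eq_zero (Finset.mem_univ i)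
        (by rw [Set.indicator_of_notMem hi])).symm
  calc ∑ f : Fin n → ι, (∏ i, w (f i)) *
        (Set.univ.pi s).indicator (1 : (Fin n → α) → ℝ≥0∞) (fun i => x (f i))
      = ∑ f : Fin n → ι, ∏ i, (w (f i) * (s i).indicator 1 (x (f i))) := by
        refine Finset.sum_congr rfl fun f _ => ?_
        rw [key f, Finset.prod_mul_distrib]
    _ = ∏ i : Fin n, ∑ q : ι, w q * (s i).indicator 1 (x q) := by
        rw [Finset.prod_univ_sum]
        rw [Fintype.piFinset_univ]
    _ = ∏ i : Fin n, (∑ q : ι, w q • Measure.dirac (x q)) (s i) := by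
        refine Finset.prod_congr rfl fun i _ => ?_
        rw [sum_smul_dirac_apply]

lemma integrable_sum_smul_dirac (w : ι → ℝ) (x : ι → α) (g : α → ℝ)
    (hg : Measurable g) (q : ι) :
    Integrable g (ENNReal.ofReal (w q) • Measure.dirac (x q)) := by
  refine Integrable.smul_measure ?_ ENNReal.ofReal_ne_top
  refine ⟨hg.aestronglyMeasurable, ?_⟩
  rw [HasFiniteIntegral, lintegral_dirac]
  exact ENNReal.coe_lt_top

lemma integral_sum_dirac (w : ι → ℝ) (hw : ∀ q, 0 ≤ w q) (x : ι → α) (g : α → ℝ)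
    (hg : Measurable g) :
    ∫ p, g p ∂(∑ q : ι, ENNReal.ofReal (w q) • Measure.dirac (x q)) =
      ∑ q : ι, w q * g (x q) := by
  rw [integral_finset_sum_measure (fun q _ => integrable_sum_smul_dirac w x g hg q)]
  refine Finset.sum_congr rfl fun q _ => ?_
  rw [integral_smul_measure, integral_dirac, ENNReal.toReal_ofReal (hw q), smul_eq_mul]

lemma sqrt_prod {s : Finset ι} (z : ι → ℝ) (hz : ∀ i ∈ s, 0 ≤ z i) :
    Real.sqrt (∏ i ∈ s, z i) = ∏ i ∈ s, Real.sqrt (z i) := by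
  induction s using Finset.cons_induction with
  | empty => simp
  | cons a s ha ih =>
    rw [Finset.prod_cons, Finset.prod_cons, Real.sqrt_mul (hz a (Finset.mem_cons_self a s)),
      ih (fun i hi => hz i (Finset.mem_cons_of_mem hi))]


set_option linter.unusedSectionVars false

def umap (a : ℕ) (ha : 0 < a) {m : ℕ} (j : Fin m) : Fin a := ⟨j.1 % a, Nat.mod_lt _ ha⟩

def fibU (a : ℕ) (ha : 0 < a) (m : ℕ) (t : Fin a) : Finset (Fin m) :=
  univ.filter (fun j => umap a ha j = t)

lemma le_card_fibU {a m : ℕ} (ha : 0 < a) (t : Fin a) : m / a ≤ (fibU a ha m t).card := by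
  have : (univ : Finset (Fin (m / a))).card ≤ (fibU a ha m t).card := by
    refine Finset.card_le_card_of_injOn
      (fun i => (⟨t.1 + a * i.1, ?_⟩ : Fin m)) ?_ ?_
    · have h1 : a * (i.1 + 1) ≤ a * (m / a) := Nat.mul_le_mul_left a i.2
      have h2 : a * (m / a) ≤ m := Nat.mul_div_le m a
      have h3 : t.1 < a := t.2
      calc t.1 + a * i.1 < a + a * i.1 := by omega
        _ = a * (i.1 + 1) := by ring
        _ ≤ m := le_trans h1 h2
    · intro i _
      simp only [fibU, Finset.coe_filter, Set.mem_setOf_eq, Finset.mem_filter, Finset.mem_univ, true_and]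
      apply Fin.ext
      simp only [umap]
      exact (Nat.add_mul_mod_self_left t.1 a i.1).trans (Nat.mod_eq_of_lt t.2)
    · intro i _ i' _ h
      have := congrArg Fin.val h
      simp only at this
      exact Fin.ext (Nat.eq_of_mul_eq_mul_left ha (by omega))
  simpa using this

lemma card_fibU_le {a m : ℕ} (ha : 0 < a) (t : Fin a) :
    (fibU a ha m t).card ≤ m / a + 1 := by
  have : (fibU a ha m t).card ≤ (univ : Finset (Fin (m / a + 1))).card := by
    refine Finset.card_le_card_of_injOn
      (fun j => (⟨j.1 / a, Nat.lt_succ_of_le (Nat.div_le_div_right (le_of_lt j.2))⟩ :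
        Fin (m / a + 1))) (fun _ _ => Finset.mem_univ _) ?_
    intro j hj j' hj' h
    simp only [fibU, Finset.coe_filter, Set.mem_setOf_eq] at hj hj'
    have hm : j.1 % a = t.1 := congrArg Fin.val hj.2
    have hm' : j'.1 % a = t.1 := congrArg Fin.val hj'.2
    have hd : j.1 / a = j'.1 / a := by simpa [Fin.ext_iff] using h
    refine Fin.ext ?_
    rw [← Nat.div_add_mod j.1 a, ← Nat.div_add_mod j'.1 a, hd, hm, hm']
  simpa using this

lemma fib_lower_real {a m : ℕ} (ha : 0 < a) (ham : a ≤ m) (t : Fin a) :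
    (m : ℝ) / (2 * a) ≤ ((fibU a ha m t).card : ℝ) := by
  have hd1 : 1 ≤ m / a := (Nat.one_le_div_iff ha).2 ham
  have hnat : m ≤ 2 * (m / a) * a := by
    have e := Nat.div_add_mod m a
    have hra : m % a < a := Nat.mod_lt _ ha
    have h2 : a ≤ a * (m / a) := Nat.le_mul_of_pos_right a hd1
    nlinarith [e, hra, h2]
  have hcard := le_card_fibU (m := m) ha t
  have h1 : (m : ℝ) ≤ 2 * (m / a : ℕ) * a := by exact_mod_cast hnat
  have h2 : ((m / a : ℕ) : ℝ) ≤ ((fibU a ha m t).card : ℝ) := by exact_mod_cast hcard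
  have hapos : (0 : ℝ) < a := by exact_mod_cast ha
  rw [div_le_iff₀ (by positivity)]
  nlinarith

lemma card_fib_upper_real {a m : ℕ} (ha : 0 < a) (ham : a ≤ m) (t : Fin a) :
    ((fibU a ha m t).card : ℝ) ≤ 2 * m / a := by
  have hd1 : 1 ≤ m / a := (Nat.one_le_div_iff ha).2 ham
  have hnat : (fibU a ha m t).card ≤ 2 * (m / a) := le_trans (card_fibU_le ha t) (by omega)
  have h1 : ((fibU a ha m t).card : ℝ) ≤ 2 * ((m / a : ℕ) : ℝ) := by exact_mod_cast hnat
  have h2 : ((m / a : ℕ) : ℝ) ≤ (m : ℝ) / a := Nat.cast_div_le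
  calc ((fibU a ha m t).card : ℝ) ≤ 2 * ((m / a : ℕ) : ℝ) := h1
    _ ≤ 2 * ((m : ℝ) / a) := by linarith
    _ = 2 * m / a := by ring


section Construction

variable (a b : ℕ) (ha : 0 < a) (hb : 0 < b) (η τ : ℝ) {m1 m2 : ℕ}

def sgnB (s : Bool) : ℝ := if s then 1 else -1

lemma sgnB_true : sgnB true = 1 := rfl
lemma sgnB_false : sgnB false = -1 := rfl

lemma sgnB_cases (s : Bool) : sgnB s = 1 ∨ sgnB s = -1 := by
  cases s <;> simp [sgnB]

def bitOf (p : Fin m1 × Fin m2) : Fin a × Fin b := (umap a ha p.1, umap b hb p.2)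

variable (σ : Fin a × Fin b → Bool)

def Wt (q : (Fin m1 × Fin m2) × Bool) : ℝ :=
  (1 / ((m1 : ℝ) * m2)) * ((1 + τ * sgnB (σ (bitOf a b ha hb q.1)) * sgnB q.2) / 2)

def atomΩ (q : (Fin m1 × Fin m2) × Bool) : Matrix (Fin m1) (Fin m2) ℝ × ℝ :=
  (Matrix.single q.1.1 q.1.2 1, sgnB q.2 * η)

def Pmeas : Measure (Matrix (Fin m1) (Fin m2) ℝ × ℝ) :=
  ∑ q : (Fin m1 × Fin m2) × Bool,
    ENNReal.ofReal (Wt a b ha hb τ σ q) • Measure.dirac (atomΩ η q)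

variable {a b η τ σ}

lemma Wt_nonneg (hτ0 : 0 ≤ τ) (hτ1 : τ ≤ 1) (q : (Fin m1 × Fin m2) × Bool) :
    0 ≤ Wt a b ha hb τ σ q := by
  unfold Wt
  rcases sgnB_cases (σ (bitOf a b ha hb q.1)) with h1 | h1 <;>
    rcases sgnB_cases q.2 with h2 | h2 <;> rw [h1, h2] <;>
    exact mul_nonneg (by positivity) (by nlinarith)

lemma Wt_pair_sum (hm1 : 0 < m1) (hm2 : 0 < m2) (p : Fin m1 × Fin m2) :
    Wt a b ha hb τ σ (p, true) + Wt a b ha hb τ σ (p, false) = (1 / ((m1 : ℝ) * m2)) := by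
  unfold Wt
  norm_num [sgnB]
  ring

lemma Wt_sum (hm1 : 0 < m1) (hm2 : 0 < m2) :
    ∑ q : (Fin m1 × Fin m2) × Bool, Wt a b ha hb τ σ q = 1 := by
  rw [Fintype.sum_prod_type]
  have : ∀ p : Fin m1 × Fin m2, ∑ s : Bool, Wt a b ha hb τ σ (p, s) = 1 / ((m1 : ℝ) * m2) := by
    intro p
    rw [Fintype.sum_bool]
    exact Wt_pair_sum ha hb hm1 hm2 p
  rw [Finset.sum_congr rfl fun p _ => this p, Finset.sum_const]
  have hcard : (Finset.univ : Finset (Fin m1 × Fin m2)).card = m1 * m2 := by simp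
  rw [hcard, nsmul_eq_mul]
  have h1 : ((m1 : ℝ) * m2) ≠ 0 := by positivity
  push_cast
  field_simp

lemma Wt_ennreal_sum (hm1 : 0 < m1) (hm2 : 0 < m2) (hτ0 : 0 ≤ τ) (hτ1 : τ ≤ 1) :
    ∑ q : (Fin m1 × Fin m2) × Bool, ENNReal.ofReal (Wt a b ha hb τ σ q) = 1 := by
  rw [← ENNReal.ofReal_sum_of_nonneg (fun q _ => Wt_nonneg ha hb hτ0 hτ1 q),
    Wt_sum ha hb hm1 hm2, ENNReal.ofReal_one]

lemma Pmeas_isProb (hm1 : 0 < m1) (hm2 : 0 < m2) (hτ0 : 0 ≤ τ) (hτ1 : τ ≤ 1) :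
    IsProbabilityMeasure (Pmeas a b ha hb η τ σ (m1 := m1) (m2 := m2)) :=
  isProb_sum_smul_dirac _ _ (Wt_ennreal_sum ha hb hm1 hm2 hτ0 hτ1)

end Construction

lemma double_sum_dirac_apply {α : Type*} [MeasurableSpace α] [MeasurableSingletonClass α]
    {ι' κ : Type*} [Fintype ι'] [Fintype κ] (x : ι' → κ → α) (s : Set α) :
    (∑ j : ι', ∑ k : κ, Measure.dirac (x j k)) s = ∑ j, ∑ k, s.indicator 1 (x j k) := by
  have h := congrFun (Measure.coe_finset_sum (Finset.univ : Finset ι')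
    (fun j => ∑ k, Measure.dirac (x j k))) s
  simp only [Finset.sum_apply] at h
  rw [h]
  refine Finset.sum_congr rfl fun j _ => ?_
  have h2 := congrFun (Measure.coe_finset_sum (Finset.univ : Finset κ)
    (fun k => Measure.dirac (x j k))) s
  simp only [Finset.sum_apply] at h2
  rw [h2]
  exact Finset.sum_congr rfl fun k _ => Measure.dirac_apply _ s

section Construction2

variable {a b : ℕ} (ha : 0 < a) (hb : 0 < b) {η τ : ℝ} {m1 m2 : ℕ} {σ : Fin a × Fin b → Bool}

lemma Pmeas_apply (s : Set (Matrix (Fin m1) (Fin m2) ℝ × ℝ)) :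
    Pmeas a b ha hb η τ σ s = ∑ q : (Fin m1 × Fin m2) × Bool,
      ENNReal.ofReal (Wt a b ha hb τ σ q) * s.indicator 1 (atomΩ η q) :=
  sum_smul_dirac_apply _ _ s

lemma Pmeas_map_fst (hm1 : 0 < m1) (hm2 : 0 < m2) (hτ0 : 0 ≤ τ) (hτ1 : τ ≤ 1) :
    (Pmeas a b ha hb η τ σ (m1 := m1) (m2 := m2)).map Prod.fst = unifX m1 m2 := by
  refine Measure.ext fun s hs => ?_
  rw [Measure.map_apply measurable_fst hs, Pmeas_apply]
  have hind : ∀ q : (Fin m1 × Fin m2) × Bool,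
      ENNReal.ofReal (Wt a b ha hb τ σ q) *
        (Prod.fst ⁻¹' s).indicator (1 : (Matrix (Fin m1) (Fin m2) ℝ × ℝ) → ℝ≥0∞) (atomΩ η q)
        = ENNReal.ofReal (Wt a b ha hb τ σ q) *
          s.indicator 1 (Matrix.single q.1.1 q.1.2 1) := by
    intro q
    congr 1
    all_goals simp [Set.indicator_apply, atomΩ]
  rw [Finset.sum_congr rfl fun q _ => hind q, Fintype.sum_prod_type]
  have hstep : ∀ p : Fin m1 × Fin m2,
      (∑ x : Bool, ENNReal.ofReal (Wt a b ha hb τ σ (p, x)) *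
        s.indicator 1 (Matrix.single p.1 p.2 1))
      = ENNReal.ofReal (1 / ((m1 : ℝ) * m2)) *
          s.indicator 1 (Matrix.single p.1 p.2 1) := by
    intro p
    rw [Fintype.sum_bool, ← add_mul, ← ENNReal.ofReal_add
      (Wt_nonneg ha hb hτ0 hτ1 _) (Wt_nonneg ha hb hτ0 hτ1 _), Wt_pair_sum ha hb hm1 hm2 p]
  rw [Finset.sum_congr rfl fun p _ => hstep p]
  have hcoef : ENNReal.ofReal (1 / ((m1:ℝ) * m2)) = ((m1 : ℝ≥0∞) * (m2 : ℝ≥0∞))⁻¹ := by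
    have hpos : (0:ℝ) < (m1:ℝ)*m2 := by
      have h1 : (0:ℝ) < (m1:ℝ) := by exact_mod_cast hm1
      have h2 : (0:ℝ) < (m2:ℝ) := by exact_mod_cast hm2
      positivity
    rw [one_div, ENNReal.ofReal_inv_of_pos hpos, ENNReal.ofReal_mul (by positivity)]
    simp [ENNReal.ofReal_natCast]
  rw [unifX, Measure.smul_apply, double_sum_dirac_apply, smul_eq_mul, ← hcoef,
    Finset.mul_sum, Fintype.sum_prod_type]
  refine Finset.sum_congr rfl fun j _ => ?_
  rw [Finset.mul_sum]

lemma Pmeas_ae (hη : 0 ≤ η) :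
    ∀ᵐ p ∂(Pmeas a b ha hb η τ σ (m1 := m1) (m2 := m2)), |p.2| ≤ η := by
  rw [ae_iff, Pmeas_apply]
  refine Finset.sum_eq_zero fun q _ => ?_
  have : atomΩ η q ∉ {p : Matrix (Fin m1) (Fin m2) ℝ × ℝ | ¬ |p.2| ≤ η} := by
    simp only [Set.mem_setOf_eq, not_not, atomΩ]
    rcases sgnB_cases q.2 with h | h <;> rw [h] <;> simp [abs_le] <;> linarith
  rw [Set.indicator_of_notMem this, mul_zero]

lemma Pmeas_memPeta (hm1 : 0 < m1) (hm2 : 0 < m2) (hτ0 : 0 ≤ τ) (hτ1 : τ ≤ 1) (hη : 0 ≤ η) :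
    memPeta m1 m2 η (Pmeas a b ha hb η τ σ) :=
  ⟨Pmeas_isProb ha hb hm1 hm2 hτ0 hτ1, Pmeas_map_fst ha hb hm1 hm2 hτ0 hτ1, Pmeas_ae ha hb hη⟩

end Construction2

lemma tip_eq {m1 m2 : ℕ} (A B : Matrix (Fin m1) (Fin m2) ℝ) :
    tip A B = ∑ j, ∑ k, A j k * B j k := by
  rw [tip]
  simp only [Matrix.trace, Matrix.diag, Matrix.mul_apply, Matrix.transpose_apply]
  exact Finset.sum_comm

lemma tip_stdBasis {m1 m2 : ℕ} (A : Matrix (Fin m1) (Fin m2) ℝ) (j : Fin m1) (k : Fin m2) :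
    tip A (Matrix.single j k 1) = A j k := by
  rw [tip_eq]
  simp [Matrix.single, ite_and, mul_ite, Finset.sum_ite_eq, Finset.sum_ite_eq']

lemma measurable_risk_integrand {m1 m2 : ℕ} (A : Matrix (Fin m1) (Fin m2) ℝ) :
    Measurable (fun p : Matrix (Fin m1) (Fin m2) ℝ × ℝ => (p.2 - tip A p.1) ^ 2) := by
  have h1 : Measurable (fun p : Matrix (Fin m1) (Fin m2) ℝ × ℝ => tip A p.1) := by
    have : (fun p : Matrix (Fin m1) (Fin m2) ℝ × ℝ => tip A p.1) =
        fun p : Matrix (Fin m1) (Fin m2) ℝ × ℝ => ∑ j, ∑ k, A j k * p.1 j k := by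
      funext p; rw [tip_eq]
    rw [this]
    refine Finset.measurable_sum _ fun j _ => ?_
    refine Finset.measurable_sum _ fun k _ => ?_
    have hjk : Measurable (fun p : Matrix (Fin m1) (Fin m2) ℝ × ℝ => p.1 j k) :=
      (measurable_fst.eval (a := j)).eval (a := k)
    exact measurable_const.mul hjk
  exact ((measurable_snd.sub h1).pow measurable_const)

section Construction3

variable {a b : ℕ} (ha : 0 < a) (hb : 0 < b) {η τ : ℝ} {m1 m2 : ℕ} {σ : Fin a × Fin b → Bool}

lemma risk_Pmeas (hτ0 : 0 ≤ τ) (hτ1 : τ ≤ 1) (A : Matrix (Fin m1) (Fin m2) ℝ) :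
    risk (Pmeas a b ha hb η τ σ) A =
      ∑ q : (Fin m1 × Fin m2) × Bool, Wt a b ha hb τ σ q *
        (sgnB q.2 * η - A q.1.1 q.1.2) ^ 2 := by
  rw [risk, Pmeas]
  rw [integral_sum_dirac _ (fun q => Wt_nonneg ha hb hτ0 hτ1 q) _ _
    (measurable_risk_integrand A)]
  refine Finset.sum_congr rfl fun q _ => ?_
  rw [atomΩ]
  simp only
  rw [tip_stdBasis]

def Umat (a : ℕ) (ha : 0 < a) (m1 : ℕ) : Matrix (Fin m1) (Fin a) ℝ :=
  Matrix.of fun j t => if umap a ha j = t then 1 else 0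

def VmatT (b : ℕ) (hb : 0 < b) (m2 : ℕ) : Matrix (Fin b) (Fin m2) ℝ :=
  Matrix.of fun s k => if umap b hb k = s then 1 else 0

def Smat (a b : ℕ) (η τ : ℝ) (σ : Fin a × Fin b → Bool) : Matrix (Fin a) (Fin b) ℝ :=
  Matrix.of fun t s => η * τ * sgnB (σ (t, s))

def Astar (a b : ℕ) (ha : 0 < a) (hb : 0 < b) (η τ : ℝ) (σ : Fin a × Fin b → Bool)
    (m1 m2 : ℕ) : Matrix (Fin m1) (Fin m2) ℝ :=
  Umat a ha m1 * Smat a b η τ σ * VmatT b hb m2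

lemma Astar_apply (j : Fin m1) (k : Fin m2) :
    Astar a b ha hb η τ σ m1 m2 j k = η * τ * sgnB (σ (bitOf a b ha hb (j, k))) := by
  rw [Astar, Matrix.mul_apply]
  have h1 : ∀ s' : Fin b, (Umat a ha m1 * Smat a b η τ σ) j s' =
      η * τ * sgnB (σ (umap a ha j, s')) := by
    intro s'
    rw [Matrix.mul_apply]
    simp [Umat, Smat, ite_mul, Finset.sum_ite_eq, Finset.sum_ite_eq']
  rw [Finset.sum_congr rfl fun s' _ => by rw [h1 s']]
  simp [VmatT, mul_ite, Finset.sum_ite_eq, Finset.sum_ite_eq', bitOf]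

lemma rank_Astar {r : ℕ} (hmin : min a b ≤ r) : (Astar a b ha hb η τ σ m1 m2).rank ≤ r := by
  have h1 : (Astar a b ha hb η τ σ m1 m2).rank ≤ (Umat a ha m1 * Smat a b η τ σ).rank :=
    le_trans (Matrix.rank_mul_le _ _) inf_le_left
  have h2 : (Umat a ha m1 * Smat a b η τ σ).rank ≤ (Smat a b η τ σ).rank :=
    le_trans (Matrix.rank_mul_le _ _) inf_le_right
  have h3 : (Smat a b η τ σ).rank ≤ a := le_trans (Matrix.rank_le_card_height _) (by simp)
  have h4 : (Smat a b η τ σ).rank ≤ b := le_trans (Matrix.rank_le_card_width _) (by simp)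
  omega

lemma sum_pairs {α γ : Type*} [Fintype α] [AddCommMonoid γ] (f : α × Bool → γ) :
    ∑ q : α × Bool, f q = ∑ p : α, (f (p, true) + f (p, false)) := by
  rw [Fintype.sum_prod_type]
  exact Finset.sum_congr rfl fun p _ => Fintype.sum_bool _

lemma risk_identity (hτ0 : 0 ≤ τ) (hτ1 : τ ≤ 1) (B : Matrix (Fin m1) (Fin m2) ℝ) :
    risk (Pmeas a b ha hb η τ σ) B =
      risk (Pmeas a b ha hb η τ σ) (Astar a b ha hb η τ σ m1 m2) +
        (1 / ((m1 : ℝ) * m2)) * ∑ p : Fin m1 × Fin m2,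
          (B p.1 p.2 - η * τ * sgnB (σ (bitOf a b ha hb p))) ^ 2 := by
  rw [risk_Pmeas ha hb hτ0 hτ1, risk_Pmeas ha hb hτ0 hτ1, sum_pairs, sum_pairs,
    Finset.mul_sum, ← Finset.sum_add_distrib]
  refine Finset.sum_congr rfl fun p _ => ?_
  simp only [Astar_apply ha hb, Prod.mk.eta]
  unfold Wt
  simp only [sgnB_true, sgnB_false, Prod.mk.eta]
  ring

end Construction3

section ProbabilityLayer

lemma indicator_one_nonneg {α : Type*} (T : Set α) (p : α) :
    0 ≤ T.indicator (1 : α → ℝ) p :=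
  Set.indicator_nonneg (fun _ _ => zero_le_one) p

lemma indicator_one_le_one {α : Type*} (T : Set α) (p : α) :
    T.indicator (1 : α → ℝ) p ≤ 1 := by
  by_cases h : p ∈ T <;> simp [Set.indicator_apply, h]

lemma ofReal_mul_indicator {α : Type*} (x : ℝ) (hx : 0 ≤ x) (T : Set α) (p : α) :
    ENNReal.ofReal x * T.indicator 1 p = ENNReal.ofReal (x * T.indicator 1 p) := by
  by_cases h : p ∈ T <;>
    simp [Set.indicator_of_mem, Set.indicator_of_notMem, h]

variable {a b : ℕ} (ha : 0 < a) (hb : 0 < b) {η τ : ℝ} {m1 m2 : ℕ} {σ : Fin a × Fin b → Bool}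

def atomTuple (η : ℝ) {m1 m2 n : ℕ} (f : Fin n → (Fin m1 × Fin m2) × Bool) :
    Fin n → Matrix (Fin m1) (Fin m2) ℝ × ℝ := fun i => atomΩ η (f i)

def pw (a b : ℕ) (ha : 0 < a) (hb : 0 < b) (τ : ℝ) (σ : Fin a × Fin b → Bool) {m1 m2 : ℕ}
    (n : ℕ) (f : Fin n → (Fin m1 × Fin m2) × Bool) : ℝ :=
  ∏ i, Wt a b ha hb τ σ (f i)

def PrR (a b : ℕ) (ha : 0 < a) (hb : 0 < b) (η τ : ℝ) (σ : Fin a × Fin b → Bool) {m1 m2 : ℕ}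
    (n : ℕ) (T : Set (Fin n → Matrix (Fin m1) (Fin m2) ℝ × ℝ)) : ℝ :=
  ∑ f : Fin n → (Fin m1 × Fin m2) × Bool,
    pw a b ha hb τ σ n f * T.indicator 1 (atomTuple η f)

lemma pw_nonneg (hτ0 : 0 ≤ τ) (hτ1 : τ ≤ 1) {n : ℕ} (f : Fin n → (Fin m1 × Fin m2) × Bool) :
    0 ≤ pw a b ha hb τ σ n f :=
  Finset.prod_nonneg fun i _ => Wt_nonneg ha hb hτ0 hτ1 _

lemma pw_sum (hm1 : 0 < m1) (hm2 : 0 < m2) (n : ℕ) :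
    ∑ f : Fin n → (Fin m1 × Fin m2) × Bool, pw a b ha hb τ σ n f = 1 := by
  have h := Finset.prod_univ_sum (fun _ : Fin n => (Finset.univ : Finset ((Fin m1 × Fin m2) × Bool)))
    (fun _ q => Wt a b ha hb τ σ q)
  rw [Fintype.piFinset_univ] at h
  calc (∑ f : Fin n → (Fin m1 × Fin m2) × Bool, pw a b ha hb τ σ n f)
      = ∑ f : Fin n → (Fin m1 × Fin m2) × Bool, ∏ i, Wt a b ha hb τ σ (f i) := rfl
    _ = ∏ _i : Fin n, ∑ q : (Fin m1 × Fin m2) × Bool, Wt a b ha hb τ σ q := h.symm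
    _ = ∏ _i : Fin n, 1 := Finset.prod_congr rfl fun i _ => Wt_sum ha hb hm1 hm2
    _ = 1 := Finset.prod_const_one

lemma PrR_nonneg (hτ0 : 0 ≤ τ) (hτ1 : τ ≤ 1) {n : ℕ}
    (T : Set (Fin n → Matrix (Fin m1) (Fin m2) ℝ × ℝ)) :
    0 ≤ PrR a b ha hb η τ σ n T :=
  Finset.sum_nonneg fun f _ => mul_nonneg (pw_nonneg ha hb hτ0 hτ1 f)
    (indicator_one_nonneg _ _)

lemma PrR_mono (hτ0 : 0 ≤ τ) (hτ1 : τ ≤ 1) {n : ℕ}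
    {T T' : Set (Fin n → Matrix (Fin m1) (Fin m2) ℝ × ℝ)} (hTT : T ⊆ T') :
    PrR a b ha hb η τ σ n T ≤ PrR a b ha hb η τ σ n T' := by
  refine Finset.sum_le_sum fun f _ => ?_
  refine mul_le_mul_of_nonneg_left ?_ (pw_nonneg ha hb hτ0 hτ1 f)
  by_cases h : atomTuple η f ∈ T
  · rw [Set.indicator_of_mem h, Set.indicator_of_mem (hTT h)]
  · rw [Set.indicator_of_notMem h]
    exact indicator_one_nonneg _ _

lemma PrR_le_one (hm1 : 0 < m1) (hm2 : 0 < m2) (hτ0 : 0 ≤ τ) (hτ1 : τ ≤ 1) {n : ℕ}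
    (T : Set (Fin n → Matrix (Fin m1) (Fin m2) ℝ × ℝ)) :
    PrR a b ha hb η τ σ n T ≤ 1 := by
  rw [← pw_sum ha hb hm1 hm2 (σ := σ) (τ := τ) n]
  refine Finset.sum_le_sum fun f _ => ?_
  have h1 : T.indicator (1 : (Fin n → Matrix (Fin m1) (Fin m2) ℝ × ℝ) → ℝ)
      (atomTuple η f) ≤ 1 := indicator_one_le_one _ _
  calc pw a b ha hb τ σ n f * T.indicator 1 (atomTuple η f)
      ≤ pw a b ha hb τ σ n f * 1 :=
        mul_le_mul_of_nonneg_left h1 (pw_nonneg ha hb hτ0 hτ1 f)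
    _ = pw a b ha hb τ σ n f := mul_one _

lemma iidSample_eq_PrR (hm1 : 0 < m1) (hm2 : 0 < m2) (hτ0 : 0 ≤ τ) (hτ1 : τ ≤ 1) (n : ℕ)
    (hP : IsProbabilityMeasure (Pmeas a b ha hb η τ σ (m1 := m1) (m2 := m2)))
    (T : Set (Fin n → Matrix (Fin m1) (Fin m2) ℝ × ℝ)) :
    iidSample n (Pmeas a b ha hb η τ σ) hP T = ENNReal.ofReal (PrR a b ha hb η τ σ n T) := by
  have hpi : iidSample n (Pmeas a b ha hb η τ σ) hP =
      ∑ f : Fin n → (Fin m1 × Fin m2) × Bool,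
        (∏ i, ENNReal.ofReal (Wt a b ha hb τ σ (f i))) • Measure.dirac (atomTuple η f) := by
    rw [iidSample, Pmeas]
    exact pi_sum_dirac _ _ (Wt_ennreal_sum ha hb hm1 hm2 hτ0 hτ1) n
  rw [hpi, sum_smul_dirac_apply]
  rw [PrR, ENNReal.ofReal_sum_of_nonneg (fun f _ => mul_nonneg (pw_nonneg ha hb hτ0 hτ1 f)
    (indicator_one_nonneg _ _))]
  refine Finset.sum_congr rfl fun f _ => ?_
  rw [← ENNReal.ofReal_prod_of_nonneg (fun i _ => Wt_nonneg ha hb hτ0 hτ1 _)]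
  exact ofReal_mul_indicator _ (pw_nonneg ha hb hτ0 hτ1 f) _ _

end ProbabilityLayer

section Affinity

lemma sgnB_not (s : Bool) : sgnB (!s) = -sgnB s := by cases s <;> simp [sgnB]

lemma sgnB_sq (s : Bool) : sgnB s * sgnB s = 1 := by cases s <;> norm_num [sgnB]

variable {a b : ℕ} (ha : 0 < a) (hb : 0 < b) {η τ : ℝ} {m1 m2 : ℕ}

lemma filter_bitOf (bt : Fin a × Fin b) :
    Finset.univ.filter (fun p : Fin m1 × Fin m2 => bitOf a b ha hb p = bt) =
      (fibU a ha m1 bt.1) ×ˢ (fibU b hb m2 bt.2) := by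
  ext p
  simp [bitOf, fibU, Finset.mem_product, Prod.ext_iff]

lemma aff_tensor (hτ0 : 0 ≤ τ) (hτ1 : τ ≤ 1) (σ σ' : Fin a × Fin b → Bool) (n : ℕ) :
    ∑ f : Fin n → (Fin m1 × Fin m2) × Bool,
        Real.sqrt (pw a b ha hb τ σ n f * pw a b ha hb τ σ' n f) =
      (∑ q : (Fin m1 × Fin m2) × Bool,
        Real.sqrt (Wt a b ha hb τ σ q * Wt a b ha hb τ σ' q)) ^ n := by
  have key : ∀ f : Fin n → (Fin m1 × Fin m2) × Bool,
      Real.sqrt (pw a b ha hb τ σ n f * pw a b ha hb τ σ' n f) =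
        ∏ i, Real.sqrt (Wt a b ha hb τ σ (f i) * Wt a b ha hb τ σ' (f i)) := by
    intro f
    have : pw a b ha hb τ σ n f * pw a b ha hb τ σ' n f =
        ∏ i, (Wt a b ha hb τ σ (f i) * Wt a b ha hb τ σ' (f i)) := by
      unfold pw
      rw [← Finset.prod_mul_distrib]
    rw [this, sqrt_prod _ (fun i _ =>
      mul_nonneg (Wt_nonneg ha hb hτ0 hτ1 _) (Wt_nonneg ha hb hτ0 hτ1 _))]
  rw [Finset.sum_congr rfl fun f _ => key f]
  have h := Finset.prod_univ_sum (fun _ : Fin n => (Finset.univ : Finset ((Fin m1 × Fin m2) × Bool)))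
    (fun _ q => Real.sqrt (Wt a b ha hb τ σ q * Wt a b ha hb τ σ' q))
  rw [Fintype.piFinset_univ] at h
  rw [← h, Finset.prod_const, Finset.card_univ, Fintype.card_fin]

lemma aff1_eq (hm1 : 0 < m1) (hm2 : 0 < m2) (hτ0 : 0 ≤ τ) (hτ1 : τ ≤ 1)
    {σ σ' : Fin a × Fin b → Bool} (bt : Fin a × Fin b)
    (hdiff : ∀ c, c ≠ bt → σ c = σ' c) (hbt : σ' bt = !σ bt) :
    ∑ q : (Fin m1 × Fin m2) × Bool,
        Real.sqrt (Wt a b ha hb τ σ q * Wt a b ha hb τ σ' q) =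
      1 + (((fibU a ha m1 bt.1).card * (fibU b hb m2 bt.2).card : ℝ) / ((m1 : ℝ) * m2)) *
        (Real.sqrt (1 - τ ^ 2) - 1) := by
  classical
  have hM : (0:ℝ) < (m1 : ℝ) * m2 := by
    have h1 : (0:ℝ) < (m1:ℝ) := by exact_mod_cast hm1
    have h2 : (0:ℝ) < (m2:ℝ) := by exact_mod_cast hm2
    positivity
  rw [sum_pairs]
  have key : ∀ p : Fin m1 × Fin m2,
      (Real.sqrt (Wt a b ha hb τ σ (p, true) * Wt a b ha hb τ σ' (p, true)) +
        Real.sqrt (Wt a b ha hb τ σ (p, false) * Wt a b ha hb τ σ' (p, false))) =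
      (if bitOf a b ha hb p = bt then (1 / ((m1:ℝ)*m2)) * Real.sqrt (1 - τ^2)
        else 1 / ((m1:ℝ)*m2)) := by
    intro p
    by_cases hp : bitOf a b ha hb p = bt
    · rw [if_pos hp]
      have hprod : ∀ s : Bool, Wt a b ha hb τ σ (p, s) * Wt a b ha hb τ σ' (p, s) =
          (1 / (2 * ((m1:ℝ)*m2)))^2 * (1 - τ^2) := by
        intro s
        unfold Wt
        rw [hp, hbt, sgnB_not]
        simp only
        rcases sgnB_cases (σ bt) with h1 | h1 <;> rcases sgnB_cases s with h2 | h2 <;>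
          rw [h1, h2] <;> ring
      rw [hprod true, hprod false, Real.sqrt_mul (by positivity),
        Real.sqrt_sq (by positivity)]
      ring
    · rw [if_neg hp]
      have heq : ∀ s : Bool, Wt a b ha hb τ σ' (p, s) = Wt a b ha hb τ σ (p, s) := by
        intro s
        unfold Wt
        rw [← hdiff _ hp]
      rw [heq true, heq false, Real.sqrt_mul_self (Wt_nonneg ha hb hτ0 hτ1 _),
        Real.sqrt_mul_self (Wt_nonneg ha hb hτ0 hτ1 _)]
      exact Wt_pair_sum ha hb hm1 hm2 p
  rw [Finset.sum_congr rfl fun p _ => key p]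
  rw [Finset.sum_ite, Finset.sum_const, Finset.sum_const, filter_bitOf]
  have hc1 : ((fibU a ha m1 bt.1) ×ˢ (fibU b hb m2 bt.2)).card =
      (fibU a ha m1 bt.1).card * (fibU b hb m2 bt.2).card := Finset.card_product _ _
  have hc2 : (Finset.univ.filter
      (fun p : Fin m1 × Fin m2 => ¬ bitOf a b ha hb p = bt)).card =
      m1 * m2 - (fibU a ha m1 bt.1).card * (fibU b hb m2 bt.2).card := by
    have := Finset.card_filter_add_card_filter_not
      (s := (Finset.univ : Finset (Fin m1 × Fin m2)))
      (p := fun p => bitOf a b ha hb p = bt)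
    rw [filter_bitOf, hc1] at this
    have hcu : (Finset.univ : Finset (Fin m1 × Fin m2)).card = m1 * m2 := by simp
    omega
  rw [hc1, hc2]
  have hle1 : (fibU a ha m1 bt.1).card ≤ m1 := by
    simpa using Finset.card_le_card (Finset.subset_univ (fibU a ha m1 bt.1))
  have hle2 : (fibU b hb m2 bt.2).card ≤ m2 := by
    simpa using Finset.card_le_card (Finset.subset_univ (fibU b hb m2 bt.2))
  have hle : (fibU a ha m1 bt.1).card * (fibU b hb m2 bt.2).card ≤ m1 * m2 :=
    Nat.mul_le_mul hle1 hle2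
  have hcast : ((m1 * m2 - (fibU a ha m1 bt.1).card * (fibU b hb m2 bt.2).card : ℕ) : ℝ) =
      (m1:ℝ) * m2 - ((fibU a ha m1 bt.1).card * (fibU b hb m2 bt.2).card : ℕ) := by
    rw [Nat.cast_sub hle]; push_cast; ring
  rw [nsmul_eq_mul, nsmul_eq_mul, hcast]
  push_cast
  field_simp
  ring

end Affinity

section TestBound

lemma sum_sqrt_sq_le {ι' : Type*} [Fintype ι'] (p q : ι' → ℝ) (hp : ∀ i, 0 ≤ p i)
    (hq : ∀ i, 0 ≤ q i) (hps : ∑ i, p i ≤ 1) (hqs : ∑ i, q i ≤ 1)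
    (P : ι' → Prop) [DecidablePred P] :
    (∑ i, Real.sqrt (p i * q i)) ^ 2 ≤
      2 * ((∑ i, if P i then p i else 0) + (∑ i, if ¬ P i then q i else 0)) := by
  classical
  set s1 := Finset.univ.filter P with hs1
  set s2 := Finset.univ.filter (fun i => ¬ P i) with hs2
  have hsplit : ∑ i, Real.sqrt (p i * q i) =
      (∑ i ∈ s1, Real.sqrt (p i * q i)) + (∑ i ∈ s2, Real.sqrt (p i * q i)) :=
    (Finset.sum_filter_add_sum_filter_not Finset.univ P _).symm
  have hcs : ∀ t : Finset ι', (∑ i ∈ t, Real.sqrt (p i * q i)) ^ 2 ≤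
      (∑ i ∈ t, p i) * (∑ i ∈ t, q i) := by
    intro t
    have h := Finset.sum_mul_sq_le_sq_mul_sq t (fun i => Real.sqrt (p i))
      (fun i => Real.sqrt (q i))
    have h1 : ∀ i ∈ t, Real.sqrt (p i) * Real.sqrt (q i) = Real.sqrt (p i * q i) :=
      fun i _ => (Real.sqrt_mul (hp i) (q i)).symm
    have h2 : ∀ i ∈ t, Real.sqrt (p i) ^ 2 = p i := fun i _ => Real.sq_sqrt (hp i)
    have h3 : ∀ i ∈ t, Real.sqrt (q i) ^ 2 = q i := fun i _ => Real.sq_sqrt (hq i)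
    rw [Finset.sum_congr rfl h1, Finset.sum_congr rfl h2, Finset.sum_congr rfl h3] at h
    exact h
  have hsub : ∀ t : Finset ι', (∑ i ∈ t, q i) ≤ 1 := by
    intro t
    refine le_trans (Finset.sum_le_sum_of_subset_of_nonneg (Finset.subset_univ t)
      (fun i _ _ => hq i)) hqs
  have hsubp : ∀ t : Finset ι', (∑ i ∈ t, p i) ≤ 1 := by
    intro t
    refine le_trans (Finset.sum_le_sum_of_subset_of_nonneg (Finset.subset_univ t)
      (fun i _ _ => hp i)) hps
  have hb1 : (∑ i ∈ s1, Real.sqrt (p i * q i)) ^ 2 ≤ ∑ i ∈ s1, p i := by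
    refine le_trans (hcs s1) ?_
    have := hsub s1
    have hpn : 0 ≤ ∑ i ∈ s1, p i := Finset.sum_nonneg fun i _ => hp i
    nlinarith
  have hb2 : (∑ i ∈ s2, Real.sqrt (p i * q i)) ^ 2 ≤ ∑ i ∈ s2, q i := by
    refine le_trans (hcs s2) ?_
    have := hsubp s2
    have hqn : 0 ≤ ∑ i ∈ s2, q i := Finset.sum_nonneg fun i _ => hq i
    nlinarith
  have he1 : (∑ i, if P i then p i else 0) = ∑ i ∈ s1, p i := (Finset.sum_filter _ _).symm
  have he2 : (∑ i, if ¬ P i then q i else 0) = ∑ i ∈ s2, q i := (Finset.sum_filter _ _).symm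
  rw [hsplit, he1, he2]
  nlinarith [sq_nonneg ((∑ i ∈ s1, Real.sqrt (p i * q i)) - (∑ i ∈ s2, Real.sqrt (p i * q i)))]

variable {a b : ℕ} (ha : 0 < a) (hb : 0 < b) {η τ : ℝ} {m1 m2 : ℕ}

lemma pair_test (hm1 : 0 < m1) (hm2 : 0 < m2) (hτ0 : 0 ≤ τ) (hτ1 : τ ≤ 1)
    (σ σ' : Fin a × Fin b → Bool) (n : ℕ)
    (T : Set (Fin n → Matrix (Fin m1) (Fin m2) ℝ × ℝ)) :
    (∑ f : Fin n → (Fin m1 × Fin m2) × Bool,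
      Real.sqrt (pw a b ha hb τ σ n f * pw a b ha hb τ σ' n f)) ^ 2 / 2 ≤
      PrR a b ha hb η τ σ n T + PrR a b ha hb η τ σ' n Tᶜ := by
  classical
  have h := sum_sqrt_sq_le (pw a b ha hb τ σ n) (pw a b ha hb τ σ' n)
    (pw_nonneg ha hb hτ0 hτ1) (pw_nonneg ha hb hτ0 hτ1)
    (le_of_eq (pw_sum ha hb hm1 hm2 n)) (le_of_eq (pw_sum ha hb hm1 hm2 n))
    (fun f => atomTuple η f ∈ T)
  have e1 : PrR a b ha hb η τ σ n T =
      ∑ f : Fin n → (Fin m1 × Fin m2) × Bool,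
        if atomTuple η f ∈ T then pw a b ha hb τ σ n f else 0 := by
    refine Finset.sum_congr rfl fun f _ => ?_
    by_cases hf : atomTuple η f ∈ T <;>
      simp [Set.indicator_apply, hf]
  have e2 : PrR a b ha hb η τ σ' n Tᶜ =
      ∑ f : Fin n → (Fin m1 × Fin m2) × Bool,
        if ¬ (atomTuple η f ∈ T) then pw a b ha hb τ σ' n f else 0 := by
    refine Finset.sum_congr rfl fun f _ => ?_
    by_cases hf : atomTuple η f ∈ T <;>
      simp [Set.indicator_apply, hf]
  rw [e1, e2]
  linarith

end TestBound

section PairBound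

variable {a b : ℕ} (ha : 0 < a) (hb : 0 < b) {η τ : ℝ} {m1 m2 : ℕ}

lemma pair_bound (ham : a ≤ m1) (hbm : b ≤ m2) {n : ℕ} (hn : 0 < n)
    (hτ0 : 0 ≤ τ) (hτ1 : τ ≤ 1) (hτsq : τ ^ 2 = ((a : ℝ) * b) / (16 * n))
    {σ σ' : Fin a × Fin b → Bool} (bt : Fin a × Fin b)
    (hdiff : ∀ c, c ≠ bt → σ c = σ' c) (hbt : σ' bt = !σ bt)
    (T : Set (Fin n → Matrix (Fin m1) (Fin m2) ℝ × ℝ)) :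
    1 / 4 ≤ PrR a b ha hb η τ σ n T + PrR a b ha hb η τ σ' n Tᶜ := by
  have hm1 : 0 < m1 := lt_of_lt_of_le ha ham
  have hm2 : 0 < m2 := lt_of_lt_of_le hb hbm
  have haR : (0:ℝ) < a := by exact_mod_cast ha
  have hbR : (0:ℝ) < b := by exact_mod_cast hb
  have hnR : (0:ℝ) < n := by exact_mod_cast hn
  have hm1R : (0:ℝ) < m1 := by exact_mod_cast hm1
  have hm2R : (0:ℝ) < m2 := by exact_mod_cast hm2
  -- fiber size upper bound
  have hub : ((fibU a ha m1 bt.1).card * (fibU b hb m2 bt.2).card : ℝ) ≤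
      4 * ((m1:ℝ) * m2) / ((a:ℝ) * b) := by
    have h1 := card_fib_upper_real ha ham bt.1
    have h2 := card_fib_upper_real hb hbm bt.2
    have hc1 : (0:ℝ) ≤ ((fibU a ha m1 bt.1).card : ℝ) := Nat.cast_nonneg _
    have hc2 : (0:ℝ) ≤ ((fibU b hb m2 bt.2).card : ℝ) := Nat.cast_nonneg _
    push_cast
    calc ((fibU a ha m1 bt.1).card : ℝ) * ((fibU b hb m2 bt.2).card : ℝ)
        ≤ (2 * m1 / a) * (2 * m2 / b) := by
          exact mul_le_mul h1 h2 hc2 (by positivity)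
      _ = 4 * ((m1:ℝ) * m2) / ((a:ℝ) * b) := by field_simp; ring
  -- single-sample affinity lower bound
  have haff1 : 1 - 1 / (4 * (n:ℝ)) ≤
      ∑ q : (Fin m1 × Fin m2) × Bool,
        Real.sqrt (Wt a b ha hb τ σ q * Wt a b ha hb τ σ' q) := by
    rw [aff1_eq ha hb hm1 hm2 hτ0 hτ1 bt hdiff hbt]
    set x := ((fibU a ha m1 bt.1).card * (fibU b hb m2 bt.2).card : ℝ) / ((m1:ℝ) * m2) with hx
    have hx0 : 0 ≤ x := by positivity
    have hxub : x ≤ 4 / ((a:ℝ) * b) := by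
      rw [hx, div_le_div_iff₀ (by positivity) (by positivity)]
      calc ((fibU a ha m1 bt.1).card * (fibU b hb m2 bt.2).card : ℝ) * ((a:ℝ)*b)
          ≤ (4 * ((m1:ℝ) * m2) / ((a:ℝ) * b)) * ((a:ℝ)*b) := by
            exact mul_le_mul_of_nonneg_right hub (by positivity)
        _ = 4 * ((m1:ℝ)*m2) := by field_simp
    have h1τ : 0 ≤ 1 - τ^2 := by nlinarith
    have hs : 1 - τ^2 ≤ Real.sqrt (1 - τ^2) := by
      have h := Real.sqrt_le_sqrt (show (1-τ^2)^2 ≤ 1-τ^2 by nlinarith)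
      rwa [Real.sqrt_sq h1τ] at h
    have hkey : -(1/(4*(n:ℝ))) ≤ x * (Real.sqrt (1 - τ^2) - 1) := by
      have e1 : x * (-(τ^2)) ≤ x * (Real.sqrt (1 - τ^2) - 1) :=
        mul_le_mul_of_nonneg_left (by linarith) hx0
      have e2 : x * τ^2 ≤ (4 / ((a:ℝ)*b)) * τ^2 :=
        mul_le_mul_of_nonneg_right hxub (by positivity)
      have e3 : (4 / ((a:ℝ)*b)) * τ^2 = 1/(4*(n:ℝ)) := by
        rw [hτsq]; field_simp; ring
      nlinarith
    linarith
  -- tensorized affinity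
  have hn1R : (1:ℝ) ≤ n := by exact_mod_cast hn
  have hnn : 0 ≤ 1 - 1 / (4 * (n:ℝ)) := by
    have : 1 / (4 * (n:ℝ)) ≤ 1/4 := by
      rw [div_le_div_iff₀ (by positivity) (by norm_num)]
      nlinarith
    linarith
  have htensor : (3:ℝ)/4 ≤ ∑ f : Fin n → (Fin m1 × Fin m2) × Bool,
      Real.sqrt (pw a b ha hb τ σ n f * pw a b ha hb τ σ' n f) := by
    rw [aff_tensor ha hb hτ0 hτ1 σ σ' n]
    have hpow : (1 - 1 / (4 * (n:ℝ))) ^ n ≤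
        (∑ q : (Fin m1 × Fin m2) × Bool,
          Real.sqrt (Wt a b ha hb τ σ q * Wt a b ha hb τ σ' q)) ^ n :=
      pow_le_pow_left₀ hnn haff1 n
    have hbern : (3:ℝ)/4 ≤ (1 - 1 / (4 * (n:ℝ))) ^ n := by
      have h := one_add_mul_le_pow (a := -(1 / (4 * (n:ℝ)))) (by nlinarith) n
      have hx : (n:ℝ) * (1 / (4 * n)) = 1/4 := by
        rw [mul_one_div, div_eq_div_iff (by positivity) (by norm_num)]
        ring
      calc (3:ℝ)/4 = 1 + (n:ℝ) * -(1/(4*(n:ℝ))) := by rw [mul_neg, hx]; ring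
        _ ≤ (1 + -(1/(4*(n:ℝ))))^n := h
        _ = (1 - 1/(4*(n:ℝ)))^n := by
            rw [show (1:ℝ) + -(1/(4*(n:ℝ))) = 1 - 1/(4*(n:ℝ)) from by ring]
    linarith
  -- conclude
  have hsq : (9:ℝ)/16 ≤ (∑ f : Fin n → (Fin m1 × Fin m2) × Bool,
      Real.sqrt (pw a b ha hb τ σ n f * pw a b ha hb τ σ' n f)) ^ 2 := by
    have := pow_le_pow_left₀ (by norm_num : (0:ℝ) ≤ 3/4) htensor 2
    calc (9:ℝ)/16 = (3/4)^2 := by norm_num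
      _ ≤ _ := this
  have hpt := pair_test ha hb hm1 hm2 hτ0 hτ1 σ σ' n T (η := η)
  linarith

end PairBound

section Counting

variable {a b : ℕ} (ha : 0 < a) (hb : 0 < b) {η τ : ℝ} {m1 m2 : ℕ}

def Sb (a b : ℕ) (ha : 0 < a) (hb : 0 < b) {m1 m2 n : ℕ}
    (g : (Fin n → Matrix (Fin m1) (Fin m2) ℝ × ℝ) → Matrix (Fin m1) (Fin m2) ℝ)
    (bt : Fin a × Fin b) (d : Fin n → Matrix (Fin m1) (Fin m2) ℝ × ℝ) : ℝ :=
  ∑ p ∈ (fibU a ha m1 bt.1) ×ˢ (fibU b hb m2 bt.2), g d p.1 p.2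

def wrongSet (a b : ℕ) (ha : 0 < a) (hb : 0 < b) {m1 m2 n : ℕ}
    (g : (Fin n → Matrix (Fin m1) (Fin m2) ℝ × ℝ) → Matrix (Fin m1) (Fin m2) ℝ)
    (σ : Fin a × Fin b → Bool) (bt : Fin a × Fin b) :
    Set (Fin n → Matrix (Fin m1) (Fin m2) ℝ × ℝ) :=
  {d | sgnB (σ bt) * Sb a b ha hb g bt d ≤ 0}

noncomputable def Wc (a b : ℕ) (ha : 0 < a) (hb : 0 < b) {m1 m2 n : ℕ}
    (g : (Fin n → Matrix (Fin m1) (Fin m2) ℝ × ℝ) → Matrix (Fin m1) (Fin m2) ℝ)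
    (σ : Fin a × Fin b → Bool) (d : Fin n → Matrix (Fin m1) (Fin m2) ℝ × ℝ) : ℝ :=
  ∑ bt : Fin a × Fin b, if sgnB (σ bt) * Sb a b ha hb g bt d ≤ 0 then (1:ℝ) else 0

def GSet (a b : ℕ) (ha : 0 < a) (hb : 0 < b) {m1 m2 n : ℕ}
    (g : (Fin n → Matrix (Fin m1) (Fin m2) ℝ × ℝ) → Matrix (Fin m1) (Fin m2) ℝ)
    (σ : Fin a × Fin b → Bool) : Set (Fin n → Matrix (Fin m1) (Fin m2) ℝ × ℝ) :=
  {d | ((a : ℝ) * b) / 16 ≤ Wc a b ha hb g σ d}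

variable {n : ℕ} {g : (Fin n → Matrix (Fin m1) (Fin m2) ℝ × ℝ) → Matrix (Fin m1) (Fin m2) ℝ}
  {σ : Fin a × Fin b → Bool}

lemma Wc_le (d : Fin n → Matrix (Fin m1) (Fin m2) ℝ × ℝ) :
    Wc a b ha hb g σ d ≤ (a : ℝ) * b := by
  unfold Wc
  calc (∑ bt : Fin a × Fin b, if sgnB (σ bt) * Sb a b ha hb g bt d ≤ 0 then (1:ℝ) else 0)
      ≤ ∑ _bt : Fin a × Fin b, (1:ℝ) := by
        refine Finset.sum_le_sum fun bt _ => ?_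
        split <;> norm_num
    _ = (a : ℝ) * b := by
        have hcu : (Finset.univ : Finset (Fin a × Fin b)).card = a * b := by simp
        rw [Finset.sum_const, hcu, nsmul_eq_mul, mul_one]
        exact Nat.cast_mul a b

lemma geometric_bound (ham : a ≤ m1) (hbm : b ≤ m2) (hη : 0 ≤ η) (hτ0 : 0 ≤ τ)
    (d : Fin n → Matrix (Fin m1) (Fin m2) ℝ × ℝ) (hd : d ∈ GSet a b ha hb g σ) :
    ((a : ℝ) * b) / 16 * (((m1:ℝ) * m2) / (4 * ((a:ℝ) * b))) * (η * τ)^2 ≤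
      ∑ p : Fin m1 × Fin m2, (g d p.1 p.2 - η * τ * sgnB (σ (bitOf a b ha hb p)))^2 := by
  classical
  have hm1 : 0 < m1 := lt_of_lt_of_le ha ham
  have hm2 : 0 < m2 := lt_of_lt_of_le hb hbm
  have haR : (0:ℝ) < a := by exact_mod_cast ha
  have hbR : (0:ℝ) < b := by exact_mod_cast hb
  have hm1R : (0:ℝ) < m1 := by exact_mod_cast hm1
  have hm2R : (0:ℝ) < m2 := by exact_mod_cast hm2
  have hsplit : ∑ p : Fin m1 × Fin m2, (g d p.1 p.2 - η * τ * sgnB (σ (bitOf a b ha hb p)))^2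
      = ∑ bt : Fin a × Fin b, ∑ p ∈ Finset.univ.filter (fun p => bitOf a b ha hb p = bt),
          (g d p.1 p.2 - η * τ * sgnB (σ (bitOf a b ha hb p)))^2 :=
    (Finset.sum_fiberwise _ _ _).symm
  rw [hsplit]
  -- per-block lower bound
  have hblock : ∀ bt : Fin a × Fin b,
      (if sgnB (σ bt) * Sb a b ha hb g bt d ≤ 0 then (1:ℝ) else 0) *
        ((((m1:ℝ) * m2) / (4 * ((a:ℝ) * b))) * (η * τ)^2) ≤
      ∑ p ∈ Finset.univ.filter (fun p => bitOf a b ha hb p = bt),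
          (g d p.1 p.2 - η * τ * sgnB (σ (bitOf a b ha hb p)))^2 := by
    intro bt
    rw [filter_bitOf ha hb bt]
    have hmem : ∀ p ∈ (fibU a ha m1 bt.1) ×ˢ (fibU b hb m2 bt.2),
        bitOf a b ha hb p = bt := by
      intro p hp
      have : p ∈ Finset.univ.filter (fun p => bitOf a b ha hb p = bt) := by
        rw [filter_bitOf ha hb bt]; exact hp
      exact (Finset.mem_filter.1 this).2
    have hrw : ∑ p ∈ (fibU a ha m1 bt.1) ×ˢ (fibU b hb m2 bt.2),
        (g d p.1 p.2 - η * τ * sgnB (σ (bitOf a b ha hb p)))^2 =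
        ∑ p ∈ (fibU a ha m1 bt.1) ×ˢ (fibU b hb m2 bt.2),
        (g d p.1 p.2 - η * τ * sgnB (σ bt))^2 :=
      Finset.sum_congr rfl fun p hp => by rw [hmem p hp]
    rw [hrw]
    set e := sgnB (σ bt) with he
    set nbR : ℝ := (((fibU a ha m1 bt.1) ×ˢ (fibU b hb m2 bt.2)).card : ℝ) with hnb
    have hnbpos : ((m1:ℝ) * m2) / (4 * ((a:ℝ) * b)) ≤ nbR := by
      rw [hnb, Finset.card_product]
      push_cast
      have h1 := fib_lower_real ha ham bt.1
      have h2 := fib_lower_real hb hbm bt.2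
      calc ((m1:ℝ) * m2) / (4 * ((a:ℝ) * b)) = ((m1:ℝ)/(2*a)) * ((m2:ℝ)/(2*b)) := by
            field_simp; ring
        _ ≤ ((fibU a ha m1 bt.1).card : ℝ) * ((fibU b hb m2 bt.2).card : ℝ) :=
            mul_le_mul h1 h2 (by positivity) (by positivity)
    have hsumnn : (0:ℝ) ≤ ∑ p ∈ (fibU a ha m1 bt.1) ×ˢ (fibU b hb m2 bt.2),
        (g d p.1 p.2 - η * τ * e)^2 := Finset.sum_nonneg fun p _ => sq_nonneg _
    by_cases hw : e * Sb a b ha hb g bt d ≤ 0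
    · rw [if_pos hw, one_mul]
      have hnb0 : (0:ℝ) < nbR := lt_of_lt_of_le (by positivity) hnbpos
      -- Cauchy-Schwarz
      have hcs := Finset.sum_mul_sq_le_sq_mul_sq
        ((fibU a ha m1 bt.1) ×ˢ (fibU b hb m2 bt.2))
        (fun _ => (1:ℝ)) (fun p => g d p.1 p.2 - η * τ * e)
      simp only [one_mul, one_pow] at hcs
      have hsum1 : ∑ _p ∈ (fibU a ha m1 bt.1) ×ˢ (fibU b hb m2 bt.2), (1:ℝ) = nbR := by
        rw [Finset.sum_const, hnb, nsmul_eq_mul, mul_one]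
      have hsumlin : ∑ p ∈ (fibU a ha m1 bt.1) ×ˢ (fibU b hb m2 bt.2),
          (g d p.1 p.2 - η * τ * e) = Sb a b ha hb g bt d - nbR * (η * τ * e) := by
        rw [Finset.sum_sub_distrib, Finset.sum_const, Sb, hnb, nsmul_eq_mul]
      rw [hsumlin, hsum1] at hcs
      have hee : e * e = 1 := sgnB_sq (σ bt)
      have hlow : (nbR * (η * τ))^2 ≤ (Sb a b ha hb g bt d - nbR * (η * τ * e))^2 := by
        nlinarith [mul_nonneg (mul_nonneg (mul_nonneg hnb0.le hη) hτ0) (neg_nonneg.2 hw),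
          sq_nonneg (Sb a b ha hb g bt d)]
      have hineq : nbR * (η * τ)^2 ≤ ∑ p ∈ (fibU a ha m1 bt.1) ×ˢ (fibU b hb m2 bt.2),
          (g d p.1 p.2 - η * τ * e)^2 := by
        have h3 : (nbR * (η * τ))^2 ≤ nbR * ∑ p ∈ (fibU a ha m1 bt.1) ×ˢ (fibU b hb m2 bt.2),
            (g d p.1 p.2 - η * τ * e)^2 := le_trans hlow hcs
        nlinarith
      calc (((m1:ℝ) * m2) / (4 * ((a:ℝ) * b))) * (η * τ)^2
          ≤ nbR * (η * τ)^2 := mul_le_mul_of_nonneg_right hnbpos (by positivity)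
        _ ≤ _ := hineq
    · rw [if_neg hw, zero_mul]
      exact hsumnn
  calc ((a : ℝ) * b) / 16 * (((m1:ℝ) * m2) / (4 * ((a:ℝ) * b))) * (η * τ)^2
      ≤ Wc a b ha hb g σ d * ((((m1:ℝ) * m2) / (4 * ((a:ℝ) * b))) * (η * τ)^2) := by
        have hG : ((a : ℝ) * b) / 16 ≤ Wc a b ha hb g σ d := hd
        have : (0:ℝ) ≤ (((m1:ℝ) * m2) / (4 * ((a:ℝ) * b))) * (η * τ)^2 := by positivity
        nlinarith
    _ = ∑ bt : Fin a × Fin b, (if sgnB (σ bt) * Sb a b ha hb g bt d ≤ 0 then (1:ℝ) else 0) *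
          ((((m1:ℝ) * m2) / (4 * ((a:ℝ) * b))) * (η * τ)^2) := by
        rw [Wc, Finset.sum_mul]
    _ ≤ _ := Finset.sum_le_sum fun bt _ => hblock bt

lemma EW_eq (hσ : True) :
    ∑ bt : Fin a × Fin b, PrR a b ha hb η τ σ n (wrongSet a b ha hb g σ bt) =
      ∑ f : Fin n → (Fin m1 × Fin m2) × Bool,
        pw a b ha hb τ σ n f * Wc a b ha hb g σ (atomTuple η f) := by
  classical
  unfold PrR
  rw [Finset.sum_comm]
  refine Finset.sum_congr rfl fun f _ => ?_
  rw [Wc, Finset.mul_sum]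
  refine Finset.sum_congr rfl fun bt _ => ?_
  congr 1

lemma EW_le (hm1 : 0 < m1) (hm2 : 0 < m2) (hτ0 : 0 ≤ τ) (hτ1 : τ ≤ 1) :
    ∑ bt : Fin a × Fin b, PrR a b ha hb η τ σ n (wrongSet a b ha hb g σ bt) ≤
      ((a : ℝ) * b) / 16 + ((a : ℝ) * b) * PrR a b ha hb η τ σ n (GSet a b ha hb g σ) := by
  classical
  rw [EW_eq ha hb trivial]
  have hperf : ∀ f : Fin n → (Fin m1 × Fin m2) × Bool,
      pw a b ha hb τ σ n f * Wc a b ha hb g σ (atomTuple η f) ≤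
        pw a b ha hb τ σ n f * (((a : ℝ) * b) / 16) +
        ((a : ℝ) * b) * (pw a b ha hb τ σ n f *
          (GSet a b ha hb g σ).indicator 1 (atomTuple η f)) := by
    intro f
    have hpw := pw_nonneg ha hb hτ0 hτ1 f (σ := σ)
    by_cases hG : atomTuple η f ∈ GSet a b ha hb g σ
    · rw [Set.indicator_of_mem hG]
      simp only [Pi.one_apply]
      have h1 : Wc a b ha hb g σ (atomTuple η f) ≤ (a:ℝ) * b := Wc_le ha hb _
      have h2 : (0:ℝ) ≤ ((a:ℝ)*b)/16 := by positivity
      have hmul : pw a b ha hb τ σ n f * Wc a b ha hb g σ (atomTuple η f) ≤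
          pw a b ha hb τ σ n f * ((a:ℝ) * b) := mul_le_mul_of_nonneg_left h1 hpw
      have hp2 : (0:ℝ) ≤ pw a b ha hb τ σ n f * (((a:ℝ)*b)/16) := mul_nonneg hpw h2
      nlinarith
    · rw [Set.indicator_of_notMem hG]
      have h1 : Wc a b ha hb g σ (atomTuple η f) ≤ ((a:ℝ)*b)/16 := by
        by_contra hcon
        push_neg at hcon
        exact hG (le_of_lt hcon)
      have hmul : pw a b ha hb τ σ n f * Wc a b ha hb g σ (atomTuple η f) ≤
          pw a b ha hb τ σ n f * (((a:ℝ)*b)/16) := mul_le_mul_of_nonneg_left h1 hpw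
      nlinarith
  calc (∑ f : Fin n → (Fin m1 × Fin m2) × Bool,
      pw a b ha hb τ σ n f * Wc a b ha hb g σ (atomTuple η f))
      ≤ ∑ f : Fin n → (Fin m1 × Fin m2) × Bool,
        (pw a b ha hb τ σ n f * (((a : ℝ) * b) / 16) +
        ((a : ℝ) * b) * (pw a b ha hb τ σ n f *
          (GSet a b ha hb g σ).indicator 1 (atomTuple η f))) :=
        Finset.sum_le_sum fun f _ => hperf f
    _ = (((a : ℝ) * b) / 16) + ((a : ℝ) * b) * PrR a b ha hb η τ σ n (GSet a b ha hb g σ) := by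
        rw [Finset.sum_add_distrib, ← Finset.sum_mul, pw_sum ha hb hm1 hm2, one_mul,
          ← Finset.mul_sum, PrR]

end Counting

section Average

variable {a b : ℕ} (ha : 0 < a) (hb : 0 < b) {η τ : ℝ} {m1 m2 : ℕ} {n : ℕ}
  {g : (Fin n → Matrix (Fin m1) (Fin m2) ℝ × ℝ) → Matrix (Fin m1) (Fin m2) ℝ}

lemma wrong_pair_bound (ham : a ≤ m1) (hbm : b ≤ m2) (hn : 0 < n)
    (hτ0 : 0 ≤ τ) (hτ1 : τ ≤ 1) (hτsq : τ ^ 2 = ((a : ℝ) * b) / (16 * n))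
    {σ σ' : Fin a × Fin b → Bool} (bt : Fin a × Fin b)
    (hσ : σ bt = true) (hσ' : σ' bt = false) (hagree : ∀ c, c ≠ bt → σ c = σ' c) :
    1 / 4 ≤ PrR a b ha hb η τ σ n (wrongSet a b ha hb g σ bt) +
      PrR a b ha hb η τ σ' n (wrongSet a b ha hb g σ' bt) := by
  have hm1 : 0 < m1 := lt_of_lt_of_le ha ham
  have hm2 : 0 < m2 := lt_of_lt_of_le hb hbm
  set T : Set (Fin n → Matrix (Fin m1) (Fin m2) ℝ × ℝ) :=
    {d | Sb a b ha hb g bt d ≤ 0} with hT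
  have hWT : wrongSet a b ha hb g σ bt = T := by
    unfold wrongSet
    ext d
    rw [hσ]
    simp [sgnB, hT]
  have hsub : Tᶜ ⊆ wrongSet a b ha hb g σ' bt := by
    intro d hd
    simp only [hT, Set.mem_compl_iff, Set.mem_setOf_eq, not_le] at hd
    show sgnB (σ' bt) * Sb a b ha hb g bt d ≤ 0
    rw [hσ']
    simp only [sgnB]
    norm_num
    linarith
  have hbt' : σ' bt = !σ bt := by rw [hσ, hσ']; rfl
  have hpb := pair_bound ha hb ham hbm hn hτ0 hτ1 hτsq bt hagree hbt' T (η := η)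
  have hmono := PrR_mono ha hb hτ0 hτ1 hsub (η := η) (σ := σ')
  rw [hWT]
  linarith

lemma avg_bit (ham : a ≤ m1) (hbm : b ≤ m2) (hn : 0 < n)
    (hτ0 : 0 ≤ τ) (hτ1 : τ ≤ 1) (hτsq : τ ^ 2 = ((a : ℝ) * b) / (16 * n))
    (bt : Fin a × Fin b) :
    (Fintype.card ((Fin a × Fin b) → Bool) : ℝ) / 8 ≤
      ∑ σ : (Fin a × Fin b) → Bool,
        PrR a b ha hb η τ σ n (wrongSet a b ha hb g σ bt) := by
  classical
  set E := Equiv.piSplitAt bt (fun _ : Fin a × Fin b => Bool) with hE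
  have hsum : ∑ σ : (Fin a × Fin b) → Bool,
      PrR a b ha hb η τ σ n (wrongSet a b ha hb g σ bt) =
      ∑ y : Bool × ({c : Fin a × Fin b // c ≠ bt} → Bool),
        PrR a b ha hb η τ (E.symm y) n (wrongSet a b ha hb g (E.symm y) bt) :=
    (Equiv.sum_comp E.symm _).symm
  rw [hsum, Fintype.sum_prod_type, Fintype.sum_bool, ← Finset.sum_add_distrib]
  have happ : ∀ (x : Bool) (r : {c : Fin a × Fin b // c ≠ bt} → Bool),
      E.symm (x, r) bt = x := by
    intro x r
    simp [hE, Equiv.piSplitAt_symm_apply]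
  have happ2 : ∀ (x : Bool) (r : {c : Fin a × Fin b // c ≠ bt} → Bool) (c : Fin a × Fin b)
      (hc : c ≠ bt), E.symm (x, r) c = r ⟨c, hc⟩ := by
    intro x r c hc
    simp [hE, Equiv.piSplitAt_symm_apply, hc]
  have hpair : ∀ r : {c : Fin a × Fin b // c ≠ bt} → Bool,
      1 / 4 ≤ PrR a b ha hb η τ (E.symm (true, r)) n
          (wrongSet a b ha hb g (E.symm (true, r)) bt) +
        PrR a b ha hb η τ (E.symm (false, r)) n
          (wrongSet a b ha hb g (E.symm (false, r)) bt) := by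
    intro r
    refine wrong_pair_bound ha hb ham hbm hn hτ0 hτ1 hτsq bt (happ true r) (happ false r) ?_
    intro c hc
    rw [happ2 true r c hc, happ2 false r c hc]
  have hcard : (Fintype.card ((Fin a × Fin b) → Bool) : ℝ) =
      2 * (Fintype.card ({c : Fin a × Fin b // c ≠ bt} → Bool) : ℝ) := by
    have := Fintype.card_congr E
    rw [Fintype.card_prod, Fintype.card_bool] at this
    rw [this]
    push_cast
    ring
  calc (Fintype.card ((Fin a × Fin b) → Bool) : ℝ) / 8
      = (Fintype.card ({c : Fin a × Fin b // c ≠ bt} → Bool) : ℝ) * (1/4) := by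
        rw [hcard]; ring
    _ ≤ _ := by
        rw [← Finset.card_univ, ← nsmul_eq_mul, ← Finset.sum_const]
        exact Finset.sum_le_sum fun r _ => hpair r

lemma exists_good_sigma (ham : a ≤ m1) (hbm : b ≤ m2) (hn : 0 < n)
    (hτ0 : 0 ≤ τ) (hτ1 : τ ≤ 1) (hτsq : τ ^ 2 = ((a : ℝ) * b) / (16 * n)) :
    ∃ σ : (Fin a × Fin b) → Bool,
      1 / 16 ≤ PrR a b ha hb η τ σ n (GSet a b ha hb g σ) := by
  classical
  have hm1 : 0 < m1 := lt_of_lt_of_le ha ham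
  have hm2 : 0 < m2 := lt_of_lt_of_le hb hbm
  have haR : (0:ℝ) < a := by exact_mod_cast ha
  have hbR : (0:ℝ) < b := by exact_mod_cast hb
  set N : ℝ := (Fintype.card ((Fin a × Fin b) → Bool) : ℝ) with hN
  have hN0 : 0 < N := by
    rw [hN]
    have : 0 < Fintype.card ((Fin a × Fin b) → Bool) := Fintype.card_pos
    exact_mod_cast this
  have hlower : ((a:ℝ) * b) * (N / 8) ≤
      ∑ σ : (Fin a × Fin b) → Bool, ∑ bt : Fin a × Fin b,
        PrR a b ha hb η τ σ n (wrongSet a b ha hb g σ bt) := by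
    rw [Finset.sum_comm]
    calc ((a:ℝ) * b) * (N / 8)
        = ∑ _bt : Fin a × Fin b, (N / 8) := by
          rw [Finset.sum_const, Finset.card_univ, nsmul_eq_mul]
          rw [Fintype.card_prod, Fintype.card_fin, Fintype.card_fin]
          push_cast
          ring
      _ ≤ _ := Finset.sum_le_sum fun bt _ =>
          avg_bit ha hb ham hbm hn hτ0 hτ1 hτsq bt
  have hupper : (∑ σ : (Fin a × Fin b) → Bool, ∑ bt : Fin a × Fin b,
      PrR a b ha hb η τ σ n (wrongSet a b ha hb g σ bt)) ≤
      N * (((a:ℝ) * b) / 16) + ((a:ℝ) * b) *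
        ∑ σ : (Fin a × Fin b) → Bool, PrR a b ha hb η τ σ n (GSet a b ha hb g σ) := by
    calc (∑ σ : (Fin a × Fin b) → Bool, ∑ bt : Fin a × Fin b,
        PrR a b ha hb η τ σ n (wrongSet a b ha hb g σ bt))
        ≤ ∑ σ : (Fin a × Fin b) → Bool, (((a:ℝ) * b) / 16 +
            ((a:ℝ) * b) * PrR a b ha hb η τ σ n (GSet a b ha hb g σ)) :=
          Finset.sum_le_sum fun σ _ => EW_le ha hb hm1 hm2 hτ0 hτ1
      _ = N * (((a:ℝ) * b) / 16) + ((a:ℝ) * b) *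
            ∑ σ : (Fin a × Fin b) → Bool, PrR a b ha hb η τ σ n (GSet a b ha hb g σ) := by
          rw [Finset.sum_add_distrib, Finset.sum_const, Finset.card_univ, nsmul_eq_mul,
            ← Finset.mul_sum, hN]
  have hS : N / 16 ≤ ∑ σ : (Fin a × Fin b) → Bool,
      PrR a b ha hb η τ σ n (GSet a b ha hb g σ) := by
    by_contra hcon
    push_neg at hcon
    have h2 : ((a:ℝ)*b) * (∑ σ : (Fin a × Fin b) → Bool,
        PrR a b ha hb η τ σ n (GSet a b ha hb g σ)) < ((a:ℝ)*b) * (N/16) :=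
      mul_lt_mul_of_pos_left hcon (by positivity)
    nlinarith
  have hex := Finset.exists_le_of_sum_le (f := fun _ : (Fin a × Fin b) → Bool => (1:ℝ)/16)
    (g := fun σ => PrR a b ha hb η τ σ n (GSet a b ha hb g σ))
    (s := Finset.univ) (Finset.univ_nonempty) ?_
  · obtain ⟨σ, _, hσ⟩ := hex
    exact ⟨σ, hσ⟩
  · rw [Finset.sum_const, Finset.card_univ, nsmul_eq_mul]
    calc (Fintype.card ((Fin a × Fin b) → Bool) : ℝ) * (1/16) = N / 16 := by rw [hN]; ring
      _ ≤ _ := hS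

end Average

end LowerBoundProof

/-- Theorem 10: lower bound on the excess prediction risk in the
statistical learning setting. There are absolute constants `β ∈ (0,1)`, `c > 0` such that
`inf_Â sup_{rank(A) ≤ r} sup_{P_{XY} ∈ 𝒫_η} P(R(Â) ≥ R(A) + cη² M r/n) ≥ β`. -/
theorem minimax_lower_bound_excess_risk :
    ∃ β c : ℝ, 0 < β ∧ β < 1 ∧ 0 < c ∧
      ∀ (n m1 m2 r : ℕ) (η : ℝ),
        0 < η → 1 ≤ r → r ≤ min m1 m2 → max m1 m2 * r ≤ n →
        ∀ Ahat : (Fin n → Matrix (Fin m1) (Fin m2) ℝ × ℝ) → Matrix (Fin m1) (Fin m2) ℝ,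
          Measurable Ahat →
          ENNReal.ofReal β ≤
            ⨆ (A : Matrix (Fin m1) (Fin m2) ℝ) (_ : A.rank ≤ r)
              (P : Measure (Matrix (Fin m1) (Fin m2) ℝ × ℝ)) (h : memPeta m1 m2 η P),
              iidSample n P h.1
                {d | risk P A + c * η ^ 2 * ((max m1 m2 : ℝ) * r / n) ≤
                  risk P (Ahat d)} := by
  refine ⟨1/16, 1/1024, by norm_num, by norm_num, by norm_num, ?_⟩
  intro n m1 m2 r η hη hr hrmin hn Ahat _hAhat
  classical
  have hrm1 : r ≤ m1 := le_trans hrmin (min_le_left _ _)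
  have hrm2 : r ≤ m2 := le_trans hrmin (min_le_right _ _)
  have hm1 : 0 < m1 := lt_of_lt_of_le hr hrm1
  have hm2 : 0 < m2 := lt_of_lt_of_le hr hrm2
  set a := if m1 ≤ m2 then r else m1 with hadef
  set b := if m1 ≤ m2 then m2 else r with hbdef
  have hfacts : 0 < a ∧ 0 < b ∧ a ≤ m1 ∧ b ≤ m2 ∧ min a b ≤ r ∧
      a * b = r * max m1 m2 := by
    by_cases h : m1 ≤ m2
    · have ha' : a = r := by rw [hadef, if_pos h]
      have hb' : b = m2 := by rw [hbdef, if_pos h]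
      have hmax : max m1 m2 = m2 := Nat.max_eq_right h
      rw [ha', hb', hmax]
      refine ⟨hr, hm2, hrm1, le_refl _, ?_, rfl⟩
      omega
    · have ha' : a = m1 := by rw [hadef, if_neg h]
      have hb' : b = r := by rw [hbdef, if_neg h]
      have hmax : max m1 m2 = m1 := Nat.max_eq_left (le_of_not_ge h)
      rw [ha', hb', hmax]
      refine ⟨hm1, hr, le_refl _, hrm2, ?_, Nat.mul_comm _ _⟩
      omega
  obtain ⟨ha, hb, ham, hbm, hminab, hab⟩ := hfacts
  have hn0 : 0 < n := by
    have h1 : 1 ≤ max m1 m2 := by omega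
    have h2 : 1 * 1 ≤ max m1 m2 * r := Nat.mul_le_mul h1 hr
    omega
  have hnR : (0:ℝ) < n := by exact_mod_cast hn0
  have habn : a * b ≤ n := by
    have hcomm : r * max m1 m2 = max m1 m2 * r := Nat.mul_comm _ _
    omega
  have haR : (0:ℝ) < a := by exact_mod_cast ha
  have hbR : (0:ℝ) < b := by exact_mod_cast hb
  have hm1R : (0:ℝ) < m1 := by exact_mod_cast hm1
  have hm2R : (0:ℝ) < m2 := by exact_mod_cast hm2
  set τ := Real.sqrt (((a:ℝ)*b)/(16*n)) with hτdef
  have hτsq : τ^2 = ((a:ℝ)*b)/(16*n) := Real.sq_sqrt (by positivity)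
  have hτ0 : 0 ≤ τ := Real.sqrt_nonneg _
  have hτ1 : τ ≤ 1 := by
    rw [hτdef, show (1:ℝ) = Real.sqrt 1 from Real.sqrt_one.symm]
    apply Real.sqrt_le_sqrt
    rw [div_le_one (by positivity)]
    calc ((a:ℝ)*b) ≤ (n:ℝ) := by exact_mod_cast habn
      _ ≤ 16*n := by linarith
  obtain ⟨σ, hσ⟩ := exists_good_sigma ha hb ham hbm hn0 hτ0 hτ1 hτsq
    (g := Ahat) (η := η)
  have hmem := Pmeas_memPeta ha hb hm1 hm2 hτ0 hτ1 (le_of_lt hη) (σ := σ)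
  have hrank : (Astar a b ha hb η τ σ m1 m2).rank ≤ r := rank_Astar ha hb hminab
  have hMR : (0:ℝ) < (m1:ℝ) * m2 := by positivity
  have hcast : (a:ℝ) * b = (r:ℝ) * ((max m1 m2 : ℕ) : ℝ) := by exact_mod_cast hab
  -- event inclusion
  have hGsub : GSet a b ha hb Ahat σ ⊆
      {d | risk (Pmeas a b ha hb η τ σ) (Astar a b ha hb η τ σ m1 m2) +
        1/1024 * η ^ 2 * ((max m1 m2 : ℝ) * r / n) ≤
        risk (Pmeas a b ha hb η τ σ) (Ahat d)} := by
    intro d hd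
    have hgeo := geometric_bound ha hb ham hbm (le_of_lt hη) hτ0 d hd
    rw [Set.mem_setOf_eq, risk_identity ha hb hτ0 hτ1 (Ahat d)]
    have heq : ((a : ℝ) * b) / 16 * (((m1:ℝ) * m2) / (4 * ((a:ℝ) * b))) * (η * τ)^2 =
        (1/1024 * η ^ 2 * ((max m1 m2 : ℝ) * r / n)) * ((m1:ℝ) * m2) := by
      rw [mul_pow, hτsq]
      rw [show ((max m1 m2 : ℝ) * r) = (a:ℝ) * b by rw [hcast, Nat.cast_max]; ring]
      field_simp
      ring
    rw [heq] at hgeo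
    have hdiv := mul_le_mul_of_nonneg_left hgeo (le_of_lt (one_div_pos.2 hMR))
    rw [show 1 / ((m1:ℝ)*m2) * ((1/1024 * η ^ 2 * ((max m1 m2 : ℝ) * r / n)) * ((m1:ℝ) * m2))
        = 1/1024 * η ^ 2 * ((max m1 m2 : ℝ) * r / n) by field_simp] at hdiv
    linarith
  have hPform := iidSample_eq_PrR ha hb hm1 hm2 hτ0 hτ1 n hmem.1
    (GSet a b ha hb Ahat σ)
  refine le_iSup_of_le (Astar a b ha hb η τ σ m1 m2) (le_iSup_of_le hrank
    (le_iSup_of_le (Pmeas a b ha hb η τ σ) (le_iSup_of_le hmem ?_)))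
  calc ENNReal.ofReal (1/16)
      ≤ ENNReal.ofReal (PrR a b ha hb η τ σ n (GSet a b ha hb Ahat σ)) :=
        ENNReal.ofReal_le_ofReal hσ
    _ = iidSample n (Pmeas a b ha hb η τ σ) hmem.1 (GSet a b ha hb Ahat σ) :=
        hPform.symm
    _ ≤ _ := measure_mono hGsub

end
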